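/- Let Λ(y1,y2) = log((cosh y1 + cosh y2)/2) and let I be its Legendre transform. Then for every x ∈ R^2 \ {0} and λ > 0, inf_{γ > 0} (λγ + γ·I(x/γ)) = max{ x·y : y ∈ R^2, Λ(y) = λ }. -/

import Mathlib

open scoped ENNReal

/-- The log-Laplace transform of a step of the simple random walk on ℤ². -/
noncomputable def lmgf (y : ℝ × ℝ) : ℝ := Real.log ((Real.cosh y.1 + Real.cosh y.2) / 2)

/-- The Cramér rate function (Legendre transform of `lmgf`), valued in `[0,∞]`. -/
noncomputable def cramerI (z : ℝ × ℝ) : ℝ≥0∞ :=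
  ⨆ y : ℝ × ℝ, ENNReal.ofReal (z.1 * y.1 + z.2 * y.2 - lmgf y)

lemma expAMGM {w1 w2 : ℝ} (α β : ℝ) (h1 : 0 ≤ w1) (h2 : 0 ≤ w2) (hs : w1 + w2 = 1) :
    Real.exp (w1 * α + w2 * β) ≤ w1 * Real.exp α + w2 * Real.exp β := by
  simpa [smul_eq_mul] using convexOn_exp.2 (Set.mem_univ α) (Set.mem_univ β) h1 h2 hs

lemma cosh_mul_exp_le (a d : ℝ) :
    Real.cosh a * Real.exp (Real.tanh a * d) ≤ Real.cosh (a + d) := by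
  have hca := Real.cosh_pos a
  set s := Real.tanh a with hs
  have hs1 : -1 < s := by
    rw [hs, Real.tanh_eq_sinh_div_cosh, lt_div_iff₀ hca]
    nlinarith [Real.cosh_add_sinh a, Real.exp_pos a]
  have hs2 : s < 1 := by
    rw [hs, Real.tanh_eq_sinh_div_cosh, div_lt_iff₀ hca]
    nlinarith [Real.cosh_sub_sinh a, Real.exp_pos (-a)]
  have key : Real.exp (s * d) ≤ Real.cosh d + s * Real.sinh d := by
    have h := expAMGM (w1 := (1+s)/2) (w2 := (1-s)/2) d (-d) (by linarith) (by linarith) (by ring)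
    have harg : (1+s)/2 * d + (1-s)/2 * (-d) = s * d := by ring
    rw [harg] at h
    rw [Real.cosh_eq, Real.sinh_eq]
    linarith [h]
  have hsinh : Real.sinh a = s * Real.cosh a := by
    rw [hs, Real.tanh_eq_sinh_div_cosh]; field_simp
  rw [Real.cosh_add, hsinh]
  nlinarith [key, hca]

lemma grad_ineq (a b u v : ℝ) :
    lmgf (a, b) + (Real.sinh a * (u - a) + Real.sinh b * (v - b)) / (Real.cosh a + Real.cosh b)
      ≤ lmgf (u, v) := by
  have hca := Real.cosh_pos a
  have hcb := Real.cosh_pos b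
  have hcu := Real.cosh_pos u
  have hcv := Real.cosh_pos v
  set S := Real.cosh a + Real.cosh b with hS
  have hSpos : 0 < S := by positivity
  set Q := (Real.sinh a * (u - a) + Real.sinh b * (v - b)) / S with hQ
  have hta : Real.cosh a * Real.tanh a = Real.sinh a := by
    rw [Real.tanh_eq_sinh_div_cosh]; field_simp
  have htb : Real.cosh b * Real.tanh b = Real.sinh b := by
    rw [Real.tanh_eq_sinh_div_cosh]; field_simp
  have step1 : Real.exp Q * S ≤ Real.cosh u + Real.cosh v := by
    have h := expAMGM (w1 := Real.cosh a / S) (w2 := Real.cosh b / S)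
      (Real.tanh a * (u - a)) (Real.tanh b * (v - b))
      (by positivity) (by positivity) (by field_simp; exact hS.symm)
    have harg : Real.cosh a / S * (Real.tanh a * (u - a)) + Real.cosh b / S * (Real.tanh b * (v - b)) = Q := by
      rw [hQ, ← hta, ← htb]
      field_simp
    rw [harg] at h
    have h1 := cosh_mul_exp_le a (u - a)
    have h2 := cosh_mul_exp_le b (v - b)
    simp only [add_sub_cancel] at h1 h2
    have hmul := mul_le_mul_of_nonneg_right h hSpos.le
    have hcan : ∀ c e : ℝ, c / S * e * S = c * e := by
      intro c e; field_simp
    rw [add_mul, hcan, hcan] at hmul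
    calc Real.exp Q * S ≤ Real.cosh a * Real.exp (Real.tanh a * (u-a)) + Real.cosh b * Real.exp (Real.tanh b * (v-b)) := by
          linarith [hmul]
      _ ≤ Real.cosh u + Real.cosh v := by linarith [h1, h2]
  have hlog : Real.log (Real.exp Q * S / 2) ≤ Real.log ((Real.cosh u + Real.cosh v) / 2) := by
    clear_value S Q
    apply Real.log_le_log (by positivity)
    linarith [step1]
  rw [show Real.exp Q * S / 2 = Real.exp Q * (S / 2) by ring,
    Real.log_mul (Real.exp_pos Q).ne' (by positivity), Real.log_exp] at hlog
  simp only [lmgf]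
  linarith

/-- The inf-convolution form of the surface tension equals the constrained linear
maximization over the level set of `Λ`:
`inf_{γ>0} (λγ + γ I(x/γ)) = max{ x·y : Λ(y) = λ }`. -/
theorem inf_conv_eq_max_level (x : ℝ × ℝ) (hx : x ≠ 0) (lam : ℝ) (hlam : 0 < lam) :
    ∃ M : ℝ,
      IsGreatest {v : ℝ | ∃ y : ℝ × ℝ, lmgf y = lam ∧ v = x.1 * y.1 + x.2 * y.2} M ∧
      (⨅ γ ∈ Set.Ioi (0 : ℝ),
          (ENNReal.ofReal (lam * γ) + ENNReal.ofReal γ * cramerI (γ⁻¹ • x)))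
        = ENNReal.ofReal M := by
  -- continuity of t ↦ lmgf (arsinh (t x₁), arsinh (t x₂))
  have hlmc : Continuous lmgf := by
    apply Continuous.log
    · fun_prop
    · intro y
      have h1 := Real.cosh_pos y.1
      have h2 := Real.cosh_pos y.2
      positivity
  set g : ℝ → ℝ := fun t => lmgf (Real.arsinh (t * x.1), Real.arsinh (t * x.2)) with hg
  have hgc : Continuous g := by
    apply hlmc.comp
    exact (Real.continuous_arsinh.comp (continuous_id.mul continuous_const)).prodMk
      (Real.continuous_arsinh.comp (continuous_id.mul continuous_const))
  have hg0 : g 0 = 0 := by simp [hg, lmgf]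
  -- a point where g exceeds lam
  have hcabs : 0 < |x.1| + |x.2| := by
    rcases eq_or_ne x.1 0 with h1 | h1
    · have h2 : x.2 ≠ 0 := by
        intro h2; exact hx (Prod.ext h1 h2)
      have := abs_pos.mpr h2
      have := abs_nonneg x.1
      linarith
    · have := abs_pos.mpr h1
      have := abs_nonneg x.2
      linarith
  set T : ℝ := 2 * Real.exp lam / (|x.1| + |x.2|) with hT
  have hTpos : 0 < T := by positivity
  have hgT : lam ≤ g T := by
    have key : 2 * Real.exp lam ≤ Real.cosh (Real.arsinh (T * x.1)) + Real.cosh (Real.arsinh (T * x.2)) := by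
      have e1 : ∀ z : ℝ, |z| ≤ Real.cosh (Real.arsinh z) := by
        intro z
        rw [Real.cosh_arsinh, ← Real.sqrt_sq_eq_abs]
        exact Real.sqrt_le_sqrt (by nlinarith)
      have h1 := e1 (T * x.1)
      have h2 := e1 (T * x.2)
      rw [abs_mul, abs_of_pos hTpos] at h1 h2
      have hTc : T * (|x.1| + |x.2|) = 2 * Real.exp lam := by
        rw [hT]; field_simp
      nlinarith
    show lam ≤ Real.log _
    rw [Real.le_log_iff_exp_le (by positivity)]
    linarith
  -- IVT
  obtain ⟨t, htmem, htg⟩ := intermediate_value_Icc hTpos.le hgc.continuousOn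
    (by rw [hg0]; exact ⟨hlam.le, hgT⟩)
  have htpos : 0 < t := by
    rcases lt_or_eq_of_le htmem.1 with h | h
    · exact h
    · exfalso; rw [← h, hg0] at htg; exact hlam.ne' htg.symm
  set a : ℝ := Real.arsinh (t * x.1) with ha
  set b : ℝ := Real.arsinh (t * x.2) with hb
  have hab : lmgf (a, b) = lam := htg
  have hsa : Real.sinh a = t * x.1 := Real.sinh_arsinh _
  have hsb : Real.sinh b = t * x.2 := Real.sinh_arsinh _
  set S : ℝ := Real.cosh a + Real.cosh b with hS
  have hSpos : 0 < S := by have := Real.cosh_pos a; have := Real.cosh_pos b; positivity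
  set γ₀ : ℝ := S / t with hγ₀def
  have hγ₀ : 0 < γ₀ := by positivity
  set M : ℝ := x.1 * a + x.2 * b with hM
  -- key inequality
  have KI : ∀ u v : ℝ, x.1 * u + x.2 * v ≤ M + γ₀ * (lmgf (u, v) - lam) := by
    intro u v
    have h := grad_ineq a b u v
    rw [hab, hsa, hsb] at h
    rw [← hS] at h
    have h' : t * x.1 * (u - a) + t * x.2 * (v - b) ≤ S * (lmgf (u, v) - lam) := by
      have h2 : (t * x.1 * (u - a) + t * x.2 * (v - b)) / S ≤ lmgf (u, v) - lam := by
        linarith [h]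
      have h3 := (div_le_iff₀ hSpos).mp h2
      linarith [h3]
    have hexp : x.1 * u + x.2 * v - M = (t * x.1 * (u - a) + t * x.2 * (v - b)) / t := by
      rw [hM]; field_simp; ring
    have hγexp : γ₀ * (lmgf (u, v) - lam) = S * (lmgf (u, v) - lam) / t := by
      rw [hγ₀def]; ring
    rw [← sub_le_iff_le_add', hexp, hγexp]
    exact (div_le_div_iff_of_pos_right htpos).mpr h'
  have h00 : lmgf (0, 0) = 0 := by simp [lmgf]
  have hM0 : lam * γ₀ ≤ M := by
    have := KI 0 0
    rw [h00] at this
    nlinarith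
  have hMpos : 0 < M := lt_of_lt_of_le (by positivity) hM0
  refine ⟨M, ⟨⟨(a, b), hab, rfl⟩, ?_⟩, ?_⟩
  · rintro v ⟨y, hy, rfl⟩
    have := KI y.1 y.2
    rw [Prod.mk.eta, hy] at this
    simpa using this
  · apply le_antisymm
    · refine (iInf₂_le γ₀ (Set.mem_Ioi.mpr hγ₀)).trans ?_
      have hsup : cramerI (γ₀⁻¹ • x) ≤ ENNReal.ofReal ((M - lam * γ₀) / γ₀) := by
        apply iSup_le; intro y
        apply ENNReal.ofReal_le_ofReal
        have hKI := KI y.1 y.2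
        rw [Prod.mk.eta] at hKI
        rw [le_div_iff₀ hγ₀]
        have hsm : (γ₀⁻¹ • x).1 = γ₀⁻¹ * x.1 ∧ (γ₀⁻¹ • x).2 = γ₀⁻¹ * x.2 := ⟨rfl, rfl⟩
        rw [hsm.1, hsm.2]
        have hexp : (γ₀⁻¹ * x.1 * y.1 + γ₀⁻¹ * x.2 * y.2 - lmgf y) * γ₀
            = x.1 * y.1 + x.2 * y.2 - γ₀ * lmgf y := by
          field_simp
        rw [hexp]
        linarith [hKI]
      calc ENNReal.ofReal (lam * γ₀) + ENNReal.ofReal γ₀ * cramerI (γ₀⁻¹ • x)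
          ≤ ENNReal.ofReal (lam * γ₀) + ENNReal.ofReal γ₀ * ENNReal.ofReal ((M - lam * γ₀) / γ₀) := by
            exact add_le_add_right (mul_le_mul_right hsup _) _
        _ = ENNReal.ofReal (lam * γ₀) + ENNReal.ofReal (γ₀ * ((M - lam * γ₀) / γ₀)) := by
            rw [ENNReal.ofReal_mul hγ₀.le]
        _ = ENNReal.ofReal (lam * γ₀) + ENNReal.ofReal (M - lam * γ₀) := by
            rw [mul_div_cancel₀ _ hγ₀.ne']
        _ = ENNReal.ofReal (lam * γ₀ + (M - lam * γ₀)) := by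
            rw [ENNReal.ofReal_add (by positivity) (by linarith)]
        _ = ENNReal.ofReal M := by ring_nf
    · apply le_iInf₂
      intro γ hγ
      have hγpos : 0 < γ := hγ
      by_cases hc : M ≤ lam * γ
      · exact (ENNReal.ofReal_le_ofReal hc).trans le_self_add
      · push_neg at hc
        have h1 : ENNReal.ofReal ((M - lam * γ) / γ) ≤ cramerI (γ⁻¹ • x) := by
          refine le_trans ?_ (le_iSup (fun y : ℝ × ℝ =>
            ENNReal.ofReal ((γ⁻¹ • x).1 * y.1 + (γ⁻¹ • x).2 * y.2 - lmgf y)) ((a, b) : ℝ × ℝ))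
          apply ENNReal.ofReal_le_ofReal
          have hsm : (γ⁻¹ • x).1 = γ⁻¹ * x.1 ∧ (γ⁻¹ • x).2 = γ⁻¹ * x.2 := ⟨rfl, rfl⟩
          rw [hsm.1, hsm.2]
          show (M - lam * γ) / γ ≤ γ⁻¹ * x.1 * a + γ⁻¹ * x.2 * b - lmgf (a, b)
          rw [hab, hM]
          rw [div_le_iff₀ hγpos]
          field_simp
          linarith
        calc ENNReal.ofReal M
            = ENNReal.ofReal (lam * γ) + ENNReal.ofReal (M - lam * γ) := by
              rw [← ENNReal.ofReal_add (by positivity) (by linarith)]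
              ring_nf
          _ = ENNReal.ofReal (lam * γ) + ENNReal.ofReal γ * ENNReal.ofReal ((M - lam * γ) / γ) := by
              rw [← ENNReal.ofReal_mul hγpos.le, mul_div_cancel₀ _ hγpos.ne']
          _ ≤ ENNReal.ofReal (lam * γ) + ENNReal.ofReal γ * cramerI (γ⁻¹ • x) :=
              add_le_add_right (mul_le_mul_right h1 _) _
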